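/- Let (X, d) be a semimetric space (d is symmetric, nonnegative, and d(x,y)=0 iff x=y, but the triangle inequality is not assumed). For points x, y, w ∈ X, the triangle inequality d(x,y) ≤ d(w,x) + d(w,y) holds if and only if for every t ∈ [0,1] the inequality t(1−t)·d(x,y)² ≤ (1−t)·d(w,x)² + t·d(w,y)² holds. -/

import Mathlib

theorem triangle_iff_quadratic {X : Type*} (d : X → X → ℝ)
    (hsymm : ∀ a b, d a b = d b a)
    (hnonneg : ∀ a b, 0 ≤ d a b)
    (hzero : ∀ a b, d a b = 0 ↔ a = b)
    (x y w : X) :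
    d x y ≤ d w x + d w y ↔
      ∀ t ∈ Set.Icc (0 : ℝ) 1,
        t * (1 - t) * d x y ^ 2 ≤ (1 - t) * d w x ^ 2 + t * d w y ^ 2 := by
  set a := d w x with ha
  set b := d w y with hb
  set c := d x y with hc
  constructor
  · intro h t ht
    obtain ⟨ht0, ht1⟩ := ht
    nlinarith [sq_nonneg ((1 - t) * a - t * b), mul_nonneg ht0 (by linarith : (0:ℝ) ≤ 1 - t),
      hnonneg x y, mul_nonneg (mul_nonneg ht0 (by linarith : (0:ℝ) ≤ 1 - t))
        (mul_nonneg (by linarith [hnonneg w x, hnonneg w y] : (0:ℝ) ≤ a + b - c)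
          (by linarith [hnonneg w x, hnonneg w y, hnonneg x y] : (0:ℝ) ≤ a + b + c))]
  · intro h
    rcases eq_or_lt_of_le (hnonneg w x) with ha0 | ha0
    · have hwx : w = x := (hzero w x).1 ha0.symm
      have : c = b := by rw [hc, hb, hwx]
      linarith
    rcases eq_or_lt_of_le (hnonneg w y) with hb0 | hb0
    · have hwy : w = y := (hzero w y).1 hb0.symm
      have : c = a := by rw [hc, ha, hwy, hsymm]
      linarith
    have hab : 0 < a + b := by linarith
    have ht : a / (a + b) ∈ Set.Icc (0:ℝ) 1 := by
      constructor
      · positivity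
      · rw [div_le_one hab]; linarith
    have key := h _ ht
    have h1 : 1 - a / (a + b) = b / (a + b) := by field_simp; ring
    rw [h1] at key
    have hcsq : c ^ 2 ≤ (a + b) ^ 2 := by
      have h2 : a / (a + b) * (b / (a + b)) * c ^ 2 ≤ a * b := by
        calc a / (a + b) * (b / (a + b)) * c ^ 2 ≤ b / (a + b) * a ^ 2 + a / (a + b) * b ^ 2 := key
        _ = a * b := by field_simp
      have h3 : a * b * c ^ 2 ≤ a * b * (a + b) ^ 2 := by
        have := mul_le_mul_of_nonneg_left h2 (le_of_lt (by positivity : (0:ℝ) < (a+b)^2))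
        calc a * b * c ^ 2 = (a + b) ^ 2 * (a / (a + b) * (b / (a + b)) * c ^ 2) := by
              field_simp
        _ ≤ (a + b) ^ 2 * (a * b) := this
        _ = a * b * (a + b) ^ 2 := by ring
      have := mul_pos ha0 hb0
      nlinarith
    nlinarith [hnonneg x y]
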